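/- Let q be a nonzero complex number with q ≠ ±1, and let A be a complex associative unital algebra with elements I21, I32 satisfying I21²I32 − (q+q⁻¹)I21·I32·I21 + I32·I21² = −I32 and I21·I32² − (q+q⁻¹)I32·I21·I32 + I32²·I21 = −I21. Define I31 := q^{1/2}·I21·I32 − q^{-1/2}·I32·I21 (for a fixed square root q^{1/2} of q). Then the three q-commutation relations hold: q^{1/2}I21·I32 − q^{-1/2}I32·I21 = I31, q^{1/2}I32·I31 − q^{-1/2}I31·I32 = I21, and q^{1/2}I31·I21 − q^{-1/2}I21·I31 = I32. -/

import Mathlib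

/-- In any complex unital algebra with elements `I21`, `I32` satisfying the
defining trilinear relations of `U'_q(so_3)`, the element
`I31 := q^{1/2} I21 I32 - q^{-1/2} I32 I21` satisfies the three q-commutation relations.
Here `s` is a fixed square root of `q`. -/
theorem stmt_0 (q s : ℂ) (hq : q ≠ 0) (hq1 : q ≠ 1) (hqm1 : q ≠ -1)
    (hs : s ^ 2 = q)
    {A : Type*} [Ring A] [Algebra ℂ A] (I21 I32 : A)
    (r1 : I21 ^ 2 * I32 - (q + q⁻¹) • (I21 * I32 * I21) + I32 * I21 ^ 2 = -I32)
    (r2 : I21 * I32 ^ 2 - (q + q⁻¹) • (I32 * I21 * I32) + I32 ^ 2 * I21 = -I21) :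
    let I31 := s • (I21 * I32) - s⁻¹ • (I32 * I21)
    s • (I21 * I32) - s⁻¹ • (I32 * I21) = I31 ∧
    s • (I32 * I31) - s⁻¹ • (I31 * I32) = I21 ∧
    s • (I31 * I21) - s⁻¹ • (I21 * I31) = I32 := by
  subst hs
  have hs0 : s ≠ 0 := by
    intro h; apply hq; rw [h]; ring
  intro I31
  refine ⟨rfl, ?_, ?_⟩
  · have key : I21 = (s ^ 2 + (s ^ 2)⁻¹) • (I32 * I21 * I32)
        - I21 * I32 ^ 2 - I32 ^ 2 * I21 := by
      have h : I21 = -(I21 * I32 ^ 2 - (s ^ 2 + (s ^ 2)⁻¹) • (I32 * I21 * I32)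
          + I32 ^ 2 * I21) := by rw [r2, neg_neg]
      conv_lhs => rw [h]
      module
    conv_rhs => rw [key]
    show s • (I32 * (s • (I21 * I32) - s⁻¹ • (I32 * I21)))
        - s⁻¹ • ((s • (I21 * I32) - s⁻¹ • (I32 * I21)) * I32) = _
    simp only [mul_sub, sub_mul, mul_smul_comm, smul_mul_assoc, smul_sub, smul_smul,
      pow_two, mul_assoc]
    match_scalars <;> field_simp <;> ring
  · have key : I32 = (s ^ 2 + (s ^ 2)⁻¹) • (I21 * I32 * I21)
        - I21 ^ 2 * I32 - I32 * I21 ^ 2 := by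
      have h : I32 = -(I21 ^ 2 * I32 - (s ^ 2 + (s ^ 2)⁻¹) • (I21 * I32 * I21)
          + I32 * I21 ^ 2) := by rw [r1, neg_neg]
      conv_lhs => rw [h]
      module
    conv_rhs => rw [key]
    show s • ((s • (I21 * I32) - s⁻¹ • (I32 * I21)) * I21)
        - s⁻¹ • (I21 * (s • (I21 * I32) - s⁻¹ • (I32 * I21))) = _
    simp only [mul_sub, sub_mul, mul_smul_comm, smul_mul_assoc, smul_sub, smul_smul,
      pow_two, mul_assoc]
    match_scalars <;> field_simp <;> ring
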